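/- If α ∈ K∞ satisfies α(s) < s for all s > 0, then for every s ≥ 0 the iterates α^k(s) converge to 0 as k → ∞, and moreover there exists a class-KL function β with α^k(s) ≤ β(s,k) for all s ≥ 0 and k ∈ ℕ (e.g., one may take β such that β(s,k) ≥ α^k(s) and β(s,·) nonincreasing to 0, β(·,k) ∈ K). -/

import Mathlib

open Filter Topology

/-- Class-K function: continuous, strictly increasing on [0,∞), zero at zero. -/
def ClassK (α : ℝ → ℝ) : Prop :=
  ContinuousOn α (Set.Ici 0) ∧ StrictMonoOn α (Set.Ici 0) ∧ α 0 = 0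

/-- Class-K∞ function. -/
def ClassKInf (α : ℝ → ℝ) : Prop :=
  ClassK α ∧ Filter.Tendsto α Filter.atTop Filter.atTop

/-- Class-KL function. -/
def ClassKL (β : ℝ → ℝ → ℝ) : Prop :=
  ContinuousOn (fun p : ℝ × ℝ => β p.1 p.2) (Set.Ici 0 ×ˢ Set.Ici 0) ∧
  (∀ s, 0 ≤ s → ClassK (fun r => β r s)) ∧
  (∀ r, 0 ≤ r → AntitoneOn (fun s => β r s) (Set.Ici 0) ∧
    Filter.Tendsto (fun s => β r s) Filter.atTop (nhds 0))

/-- Measurement function: continuous and positive semidefinite. -/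
def MeasurementFn {E : Type*} [TopologicalSpace E] (ω : E → ℝ) : Prop :=
  Continuous ω ∧ ∀ x, 0 ≤ ω x

/-- Sup-norm of an input sequence. -/
noncomputable def supNorm {U : Type*} [Norm U] (u : ℕ → U) : ℝ := ⨆ k, ‖u k‖

/-- A bounded input sequence. -/
def BddInput {U : Type*} [Norm U] (u : ℕ → U) : Prop := ∃ C, ∀ k, ‖u k‖ ≤ C

/-- Solution of x(k+1) = g(x(k), u(k)) from initial state ξ. -/
def sol {E U : Type*} (g : E → U → E) (ξ : E) (u : ℕ → U) : ℕ → E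
  | 0 => ξ
  | k + 1 => g (sol g ξ u k) (u k)

/-- Composition of gains along a path i(0), i(1), ..., i(k):
`γ (i 0) (i 1) ∘ γ (i 1) (i 2) ∘ ⋯ ∘ γ (i (k-1)) (i k)`. -/
def compAlong {ℓ : ℕ} (γ : Fin ℓ → Fin ℓ → ℝ → ℝ) (i : ℕ → Fin ℓ) : ℕ → ℝ → ℝ
  | 0 => id
  | k + 1 => (compAlong γ i k) ∘ γ (i k) (i (k + 1))

/-- Cyclic small-gain condition: all gain compositions along cycles of
length at most ℓ are strictly below the identity. -/
def SmallGainCond {ℓ : ℕ} (γ : Fin ℓ → Fin ℓ → ℝ → ℝ) : Prop :=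
  ∀ r : ℕ, 1 ≤ r → r ≤ ℓ → ∀ i : ℕ → Fin ℓ, i r = i 0 →
    ∀ s : ℝ, 0 < s → compAlong γ i r s < s

/-- A monotonic norm on ℝ^ℓ. -/
def MonotoneNorm {ℓ : ℕ} (μ : (Fin ℓ → ℝ) → ℝ) : Prop :=
  (∀ z, 0 ≤ μ z) ∧ (∀ z, μ z = 0 ↔ z = 0) ∧
  (∀ (c : ℝ) z, μ (c • z) = |c| * μ z) ∧
  (∀ z w, μ (z + w) ≤ μ z + μ w) ∧
  (∀ z w : Fin ℓ → ℝ, (∀ i, 0 ≤ z i) → (∀ i, z i ≤ w i) → μ z ≤ μ w)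

namespace IterKL

variable {α : ℝ → ℝ}

/-- Iterates applied to `max s 0`, so continuity holds on all of ℝ. -/
noncomputable def A (α : ℝ → ℝ) (k : ℕ) (s : ℝ) : ℝ := α^[k] (max s 0)

/-- Piecewise-linear ramp. -/
noncomputable def phi (k : ℕ) (t : ℝ) : ℝ := min (max (t - k) 0) 1

noncomputable def G (α : ℝ → ℝ) (N : ℕ) (s t : ℝ) : ℝ :=
  A α 0 s + ∑ k ∈ Finset.range N, phi k t * (A α (k+1) s - A α k s)

noncomputable def F (α : ℝ → ℝ) (s t : ℝ) : ℝ := G α ⌈max t 0⌉₊ s t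

lemma alpha_nonneg (hm : StrictMonoOn α (Set.Ici 0)) (h0 : α 0 = 0) :
    ∀ x : ℝ, 0 ≤ x → 0 ≤ α x := by
  intro x hx
  rcases hx.lt_or_eq with h | h
  · have := hm (Set.self_mem_Ici) (Set.mem_Ici.2 hx) h
    rw [h0] at this; exact this.le
  · simp [← h, h0]

lemma alpha_le (hm : StrictMonoOn α (Set.Ici 0)) (h0 : α 0 = 0)
    (hlt : ∀ s > (0:ℝ), α s < s) : ∀ x : ℝ, 0 ≤ x → α x ≤ x := by
  intro x hx
  rcases hx.lt_or_eq with h | h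
  · exact (hlt x h).le
  · simp [← h, h0]

lemma A_succ (k : ℕ) (s : ℝ) : A α (k+1) s = α (A α k s) :=
  Function.iterate_succ_apply' α k (max s 0)

lemma A_nonneg (hm : StrictMonoOn α (Set.Ici 0)) (h0 : α 0 = 0) (k : ℕ) (s : ℝ) :
    0 ≤ A α k s := by
  induction k with
  | zero => exact le_max_right _ _
  | succ k ih => rw [A_succ]; exact alpha_nonneg hm h0 _ ih

lemma A_zero (hm : StrictMonoOn α (Set.Ici 0)) (h0 : α 0 = 0) (k : ℕ) :
    A α k 0 = 0 := by
  induction k with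
  | zero => simp [A]
  | succ k ih => rw [A_succ, ih, h0]

lemma A_succ_le (hm : StrictMonoOn α (Set.Ici 0)) (h0 : α 0 = 0)
    (hlt : ∀ s > (0:ℝ), α s < s) (k : ℕ) (s : ℝ) : A α (k+1) s ≤ A α k s := by
  rw [A_succ]; exact alpha_le hm h0 hlt _ (A_nonneg hm h0 k s)

lemma A_cont (hc : ContinuousOn α (Set.Ici 0)) (hm : StrictMonoOn α (Set.Ici 0))
    (h0 : α 0 = 0) (k : ℕ) : Continuous (A α k) := by
  induction k with
  | zero =>
    have : A α 0 = fun s => max s 0 := by funext s; simp [A]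
    rw [this]; exact continuous_id.max continuous_const
  | succ k ih =>
    have : A α (k+1) = fun s => α (A α k s) := by funext s; exact A_succ k s
    rw [this]
    exact hc.comp_continuous ih (fun x => A_nonneg hm h0 k x)

lemma A_strictMono (hm : StrictMonoOn α (Set.Ici 0)) (h0 : α 0 = 0) (k : ℕ) :
    StrictMonoOn (A α k) (Set.Ici 0) := by
  induction k with
  | zero =>
    intro r hr r' hr' h
    have e1 : A α 0 r = r := by simp [A, max_eq_left (Set.mem_Ici.1 hr)]
    have e2 : A α 0 r' = r' := by simp [A, max_eq_left (Set.mem_Ici.1 hr')]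
    rw [e1, e2]; exact h
  | succ k ih =>
    intro r hr r' hr' h
    rw [A_succ, A_succ]
    exact hm (A_nonneg hm h0 k r) (A_nonneg hm h0 k r') (ih hr hr' h)

lemma phi_cont (k : ℕ) : Continuous (phi k) :=
  ((continuous_id.sub continuous_const).max continuous_const).min continuous_const

lemma phi_mono (k : ℕ) : Monotone (phi k) := by
  intro t t' h
  exact min_le_min (max_le_max (by linarith) le_rfl) le_rfl

lemma phi_nonneg (k : ℕ) (t : ℝ) : 0 ≤ phi k t :=
  le_min (le_max_right _ _) zero_le_one

lemma phi_le_one (k : ℕ) (t : ℝ) : phi k t ≤ 1 := min_le_right _ _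

lemma phi_of_le (k : ℕ) {t : ℝ} (h : t ≤ k) : phi k t = 0 := by
  unfold phi
  rw [max_eq_right (by linarith), min_eq_left zero_le_one]

lemma phi_of_ge (k : ℕ) {t : ℝ} (h : (k:ℝ) + 1 ≤ t) : phi k t = 1 := by
  unfold phi
  rw [max_eq_left (by linarith), min_eq_right (by linarith)]

lemma phi_of_mem (k : ℕ) {t : ℝ} (h1 : (k:ℝ) ≤ t) (h2 : t ≤ (k:ℝ)+1) :
    phi k t = t - k := by
  unfold phi
  rw [max_eq_left (by linarith), min_eq_left (by linarith)]

lemma G_stab {N M : ℕ} {s t : ℝ} (ht : t ≤ N) (hNM : N ≤ M) :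
    G α N s t = G α M s t := by
  unfold G
  congr 1
  refine Finset.sum_subset (Finset.range_subset_range.2 hNM) ?_
  intro k _ hk
  have hNk : N ≤ k := le_of_not_gt (fun h => hk (Finset.mem_range.2 h))
  have : t ≤ (k:ℝ) := le_trans ht (by exact_mod_cast hNk)
  rw [phi_of_le k this, zero_mul]

lemma G_closed (hm : StrictMonoOn α (Set.Ici 0)) (h0 : α 0 = 0)
    {n : ℕ} {s t : ℝ} (h1 : (n:ℝ) ≤ t) (h2 : t ≤ (n:ℝ)+1) :
    G α (n+1) s t = A α n s + (t - n) * (A α (n+1) s - A α n s) := by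
  unfold G
  rw [Finset.sum_range_succ]
  have hone : ∀ k ∈ Finset.range n, phi k t * (A α (k+1) s - A α k s)
      = (A α (k+1) s - A α k s) := by
    intro k hk
    have hk' : (k:ℝ) + 1 ≤ t := by
      have : (k:ℝ) + 1 ≤ n := by exact_mod_cast Finset.mem_range.1 hk
      linarith
    rw [phi_of_ge k hk', one_mul]
  have hsum : ∑ k ∈ Finset.range n, phi k t * (A α (k+1) s - A α k s)
      = ∑ k ∈ Finset.range n, (A α (k+1) s - A α k s) := Finset.sum_congr rfl hone
  have hsum2 : ∑ k ∈ Finset.range n, (A α (k+1) s - A α k s) = A α n s - A α 0 s :=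
    Finset.sum_range_sub (fun k => A α k s) n
  rw [hsum, hsum2, phi_of_mem n h1 h2]
  ring

lemma F_eq (hm : StrictMonoOn α (Set.Ici 0)) (h0 : α 0 = 0) {s t : ℝ} (ht : 0 ≤ t) :
    F α s t = A α ⌊t⌋₊ s + (t - ⌊t⌋₊) * (A α (⌊t⌋₊+1) s - A α ⌊t⌋₊ s) := by
  unfold F
  rw [max_eq_left ht, G_stab (Nat.le_ceil t) (Nat.ceil_le_floor_add_one t),
    G_closed hm h0 (Nat.floor_le ht) (Nat.lt_floor_add_one t).le]

lemma F_nat (hm : StrictMonoOn α (Set.Ici 0)) (h0 : α 0 = 0) (s : ℝ) (k : ℕ) : F α s (k : ℝ) = A α k s := by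
  rw [F_eq hm h0 (by positivity)]
  simp

lemma F_cont (hm : StrictMonoOn α (Set.Ici 0)) (h0 : α 0 = 0) (hc : ContinuousOn α (Set.Ici 0)) :
    Continuous fun p : ℝ × ℝ => F α p.1 p.2 := by
  rw [continuous_iff_continuousAt]
  intro p
  set N := ⌈max p.2 0⌉₊ + 1 with hN
  have hGN : Continuous fun q : ℝ × ℝ => G α N q.1 q.2 := by
    unfold G
    refine ((A_cont hc hm h0 0).comp continuous_fst).add ?_
    refine continuous_finset_sum _ fun k _ => ?_
    exact ((phi_cont k).comp continuous_snd).mul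
      ((((A_cont hc hm h0 (k+1)).comp continuous_fst)).sub
        ((A_cont hc hm h0 k).comp continuous_fst))
  refine hGN.continuousAt.congr ?_
  have hopen : IsOpen {q : ℝ × ℝ | q.2 < (N:ℝ)} :=
    isOpen_lt continuous_snd continuous_const
  have hp : p ∈ {q : ℝ × ℝ | q.2 < (N:ℝ)} := by
    have h1 : p.2 ≤ max p.2 0 := le_max_left _ _
    have h2 : max p.2 0 ≤ (⌈max p.2 0⌉₊ : ℝ) := Nat.le_ceil _
    have h3 : ((⌈max p.2 0⌉₊ : ℕ) : ℝ) < (N:ℝ) := by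
      rw [hN]; push_cast; linarith
    simp only [Set.mem_setOf_eq]
    linarith
  filter_upwards [hopen.mem_nhds hp] with q hq
  have hq' : q.2 < (N:ℝ) := hq
  have hN1 : (1:ℝ) ≤ (N:ℝ) := by rw [hN]; push_cast; exact_mod_cast Nat.succ_le_succ (Nat.zero_le _)
  have hle : max q.2 0 ≤ (N:ℝ) := max_le hq'.le (by linarith)
  unfold F
  exact (G_stab (le_trans (le_max_left _ _) (Nat.le_ceil _)) (Nat.ceil_le.2 hle)).symm

lemma F_anti (hm : StrictMonoOn α (Set.Ici 0)) (h0 : α 0 = 0) (hlt : ∀ s > (0:ℝ), α s < s) (r : ℝ) : AntitoneOn (fun t => F α r t) (Set.Ici 0) := by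
  intro t ht t' ht' htt'
  have ht0 : (0:ℝ) ≤ t := ht
  have ht0' : (0:ℝ) ≤ t' := ht'
  set N := ⌈t'⌉₊ with hN
  have e1 : F α r t = G α N r t := by
    unfold F; rw [max_eq_left ht0]
    exact G_stab (Nat.le_ceil t) (Nat.ceil_mono htt')
  have e2 : F α r t' = G α N r t' := by
    unfold F; rw [max_eq_left ht0']
  simp only [e1, e2]
  unfold G
  refine add_le_add le_rfl (Finset.sum_le_sum fun k _ => ?_)
  exact mul_le_mul_of_nonpos_right (phi_mono k htt')
    (sub_nonpos.2 (A_succ_le hm h0 hlt k r))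

lemma F_bounds (hm : StrictMonoOn α (Set.Ici 0)) (h0 : α 0 = 0) (hlt : ∀ s > (0:ℝ), α s < s) {s t : ℝ} (ht : 0 ≤ t) :
    A α (⌊t⌋₊+1) s ≤ F α s t ∧ F α s t ≤ A α ⌊t⌋₊ s := by
  rw [F_eq hm h0 ht]
  have hθ1 : (0:ℝ) ≤ t - ⌊t⌋₊ := sub_nonneg.2 (Nat.floor_le ht)
  have hθ2 : t - ⌊t⌋₊ ≤ 1 := by linarith [(Nat.lt_floor_add_one t).le]
  have hD : A α (⌊t⌋₊+1) s - A α ⌊t⌋₊ s ≤ 0 :=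
    sub_nonpos.2 (A_succ_le hm h0 hlt ⌊t⌋₊ s)
  constructor <;> nlinarith

lemma tendsto_iter (hm : StrictMonoOn α (Set.Ici 0)) (h0 : α 0 = 0) (hlt : ∀ s > (0:ℝ), α s < s) (hc : ContinuousOn α (Set.Ici 0)) :
    ∀ s ≥ (0:ℝ), Tendsto (fun k : ℕ => α^[k] s) atTop (𝓝 0) := by
  intro s hs
  set x : ℕ → ℝ := fun k => α^[k] s with hx
  have hxsucc : ∀ k, x (k+1) = α (x k) := fun k => Function.iterate_succ_apply' α k s
  have hpos : ∀ k, 0 ≤ x k := by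
    intro k
    induction k with
    | zero => exact hs
    | succ k ih => rw [hxsucc]; exact alpha_nonneg hm h0 _ ih
  have hanti : Antitone x := antitone_nat_of_succ_le fun k => by
    rw [hxsucc]; exact alpha_le hm h0 hlt _ (hpos k)
  have hbdd : BddBelow (Set.range x) := ⟨0, by rintro _ ⟨k, rfl⟩; exact hpos k⟩
  have hlim : Tendsto x atTop (𝓝 (⨅ k, x k)) := tendsto_atTop_ciInf hanti hbdd
  set L := ⨅ k, x k with hL
  have hL0 : 0 ≤ L := le_ciInf hpos
  have hLeq : α L = L := by
    have h1 : Tendsto (fun k => x (k+1)) atTop (𝓝 L) :=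
      hlim.comp (tendsto_add_atTop_nat 1)
    have h2 : Tendsto (fun k => α (x k)) atTop (𝓝 (α L)) := by
      have hcw : ContinuousWithinAt α (Set.Ici 0) L := hc L hL0
      exact hcw.tendsto.comp
        (tendsto_nhdsWithin_of_tendsto_nhds_of_eventually_within x hlim
          (Eventually.of_forall hpos))
    have h1' : Tendsto (fun k => α (x k)) atTop (𝓝 L) := by
      refine h1.congr fun k => ?_
      rw [hxsucc]
    exact tendsto_nhds_unique h2 h1'
  have hLzero : L = 0 := by
    rcases hL0.lt_or_eq with h | h
    · exact absurd hLeq (ne_of_lt (hlt L h))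
    · exact h.symm
  rwa [hLzero] at hlim

lemma A_tendsto (hm : StrictMonoOn α (Set.Ici 0)) (h0 : α 0 = 0) (hlt : ∀ s > (0:ℝ), α s < s) (hc : ContinuousOn α (Set.Ici 0)) (r : ℝ) :
    Tendsto (fun k : ℕ => A α k r) atTop (𝓝 0) :=
  tendsto_iter hm h0 hlt hc (max r 0) (le_max_right _ _)

lemma F_tendsto (hm : StrictMonoOn α (Set.Ici 0)) (h0 : α 0 = 0) (hlt : ∀ s > (0:ℝ), α s < s) (hc : ContinuousOn α (Set.Ici 0)) (r : ℝ) :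
    Tendsto (fun t : ℝ => F α r t) atTop (𝓝 0) := by
  have hup : Tendsto (fun t : ℝ => A α ⌊t⌋₊ r) atTop (𝓝 0) :=
    (A_tendsto hm h0 hlt hc r).comp tendsto_nat_floor_atTop
  refine squeeze_zero' ?_ ?_ hup
  · filter_upwards [eventually_ge_atTop (0:ℝ)] with t ht
    exact le_trans (A_nonneg hm h0 _ r) (F_bounds hm h0 hlt ht).1
  · filter_upwards [eventually_ge_atTop (0:ℝ)] with t ht
    exact (F_bounds hm h0 hlt ht).2

end IterKL

/-- iterates of a class-K∞ function strictly below the identity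
converge to zero and are dominated by a class-KL function. -/
theorem iterates_to_KL (α : ℝ → ℝ) (hα : ClassKInf α) (hαlt : ∀ s > (0:ℝ), α s < s) :
    (∀ s ≥ (0:ℝ), Filter.Tendsto (fun k : ℕ => α^[k] s) Filter.atTop (nhds 0)) ∧
    ∃ β, ClassKL β ∧ ∀ s ≥ (0:ℝ), ∀ k : ℕ, α^[k] s ≤ β s (k : ℝ) := by
  obtain ⟨⟨hc, hm, h0⟩, -⟩ := hα
  refine ⟨IterKL.tendsto_iter hm h0 hαlt hc, IterKL.F α, ⟨?_, ?_, ?_⟩, ?_⟩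
  · exact (IterKL.F_cont hm h0 hc).continuousOn
  · intro s hs
    refine ⟨?_, ?_, ?_⟩
    · have : Continuous fun r => IterKL.F α r s :=
        (IterKL.F_cont hm h0 hc).comp (continuous_id.prodMk continuous_const)
      exact this.continuousOn
    · intro r hr r' hr' hrr'
      show IterKL.F α r s < IterKL.F α r' s
      rw [IterKL.F_eq hm h0 hs, IterKL.F_eq hm h0 hs]
      have h1 := IterKL.A_strictMono hm h0 ⌊s⌋₊ hr hr' hrr'
      have h2 := IterKL.A_strictMono hm h0 (⌊s⌋₊+1) hr hr' hrr'
      have hθ1 : (0:ℝ) ≤ s - ⌊s⌋₊ := sub_nonneg.2 (Nat.floor_le hs)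
      have hθ2 : s - ⌊s⌋₊ < 1 := by linarith [Nat.lt_floor_add_one s]
      nlinarith
    · show IterKL.F α 0 s = 0
      rw [IterKL.F_eq hm h0 hs, IterKL.A_zero hm h0, IterKL.A_zero hm h0]
      ring
  · intro r hr
    exact ⟨IterKL.F_anti hm h0 hαlt r, IterKL.F_tendsto hm h0 hαlt hc r⟩
  · intro s hs k
    have he : IterKL.F α s (k:ℝ) = α^[k] s := by
      rw [IterKL.F_nat hm h0]
      unfold IterKL.A
      rw [max_eq_left hs]
    exact le_of_eq he.symm
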